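/- If A and B are n×n positive semidefinite Hermitian matrices with eigenvalues a_1 ≥ ... ≥ a_n ≥ 0 and b_1 ≥ ... ≥ b_n ≥ 0 respectively, then ∑_{i=1}^n a_i b_{n-i+1} ≤ trace(A B) ≤ ∑_{i=1}^n a_i b_i. -/

import Mathlib

set_option maxHeartbeats 1600000
set_option linter.unusedVariables false
open Finset


private lemma count1 (n m : ℕ) (h : m < n) :
    ∑ i ∈ range n, (if i ≤ m then (1:ℝ) else 0) = m + 1 := by
  rw [Finset.sum_boole]
  have : (range n).filter (fun i => i ≤ m) = range (m+1) := by
    ext i; simp; omega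
  rw [this]; simp

private lemma tele (n i : ℕ) (a : ℕ → ℝ) (hi : i < n) (h0 : a n = 0) :
    ∑ k ∈ range n, (if i ≤ k then a k - a (k+1) else 0) = a i := by
  rw [Finset.sum_ite, Finset.sum_const_zero, add_zero]
  have : (range n).filter (fun k => i ≤ k) = Finset.Ico i n := by
    ext k; simp; omega
  rw [this, Finset.sum_Ico_eq_sub _ (le_of_lt hi), Finset.sum_range_sub' a,
    Finset.sum_range_sub' a, h0]
  ring

private lemma sum4_swap (s t u v : Finset ℕ) (f : ℕ → ℕ → ℕ → ℕ → ℝ) :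
    ∑ i ∈ s, ∑ j ∈ t, ∑ k ∈ u, ∑ l ∈ v, f i j k l
      = ∑ k ∈ u, ∑ l ∈ v, ∑ i ∈ s, ∑ j ∈ t, f i j k l :=
  calc ∑ i ∈ s, ∑ j ∈ t, ∑ k ∈ u, ∑ l ∈ v, f i j k l
      = ∑ i ∈ s, ∑ k ∈ u, ∑ j ∈ t, ∑ l ∈ v, f i j k l :=
        Finset.sum_congr rfl fun i _ => Finset.sum_comm
    _ = ∑ k ∈ u, ∑ i ∈ s, ∑ j ∈ t, ∑ l ∈ v, f i j k l := Finset.sum_comm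
    _ = ∑ k ∈ u, ∑ i ∈ s, ∑ l ∈ v, ∑ j ∈ t, f i j k l :=
        Finset.sum_congr rfl fun k _ => Finset.sum_congr rfl fun i _ => Finset.sum_comm
    _ = ∑ k ∈ u, ∑ l ∈ v, ∑ i ∈ s, ∑ j ∈ t, f i j k l :=
        Finset.sum_congr rfl fun k _ => Finset.sum_comm

private lemma expand (n : ℕ) (c : ℕ → ℕ → ℝ) (a b : ℕ → ℝ) (h0a : a n = 0) (h0b : b n = 0) :
    ∑ i ∈ range n, ∑ j ∈ range n, c i j * (a i * b j)
      = ∑ k ∈ range n, ∑ l ∈ range n, ((a k - a (k+1)) * (b l - b (l+1))) *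
          (∑ i ∈ range n, ∑ j ∈ range n, (if i ≤ k ∧ j ≤ l then c i j else 0)) := by
  calc ∑ i ∈ range n, ∑ j ∈ range n, c i j * (a i * b j)
      = ∑ i ∈ range n, ∑ j ∈ range n, ∑ k ∈ range n, ∑ l ∈ range n,
          (if i ≤ k ∧ j ≤ l then c i j else 0) * ((a k - a (k+1)) * (b l - b (l+1))) := by
        refine Finset.sum_congr rfl fun i hi => Finset.sum_congr rfl fun j hj => ?_
        rw [mem_range] at hi hj
        conv_lhs => rw [← tele n i a hi h0a, ← tele n j b hj h0b]
        rw [Finset.sum_mul_sum, Finset.mul_sum]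
        refine Finset.sum_congr rfl fun k _ => ?_
        rw [Finset.mul_sum]
        refine Finset.sum_congr rfl fun l _ => ?_
        by_cases h1 : i ≤ k <;> by_cases h2 : j ≤ l <;> simp [h1, h2] <;> ring
    _ = ∑ k ∈ range n, ∑ l ∈ range n, ∑ i ∈ range n, ∑ j ∈ range n,
          (if i ≤ k ∧ j ≤ l then c i j else 0) * ((a k - a (k+1)) * (b l - b (l+1))) :=
        sum4_swap _ _ _ _ _
    _ = _ := by
        refine Finset.sum_congr rfl fun k _ => Finset.sum_congr rfl fun l _ => ?_
        rw [Finset.mul_sum]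
        refine Finset.sum_congr rfl fun i _ => ?_
        rw [Finset.mul_sum]
        exact Finset.sum_congr rfl fun j _ => by ring


private lemma key_rearrange (n : ℕ) (s : ℕ → ℕ → ℝ) (a b : ℕ → ℝ)
    (hs0 : ∀ i j, 0 ≤ s i j)
    (hrow : ∀ i, i < n → ∑ j ∈ range n, s i j = 1)
    (hcol : ∀ j, j < n → ∑ i ∈ range n, s i j = 1)
    (ha : Antitone a) (hb : Antitone b)
    (han : a n = 0) (hbn : b n = 0) :
    (∑ i ∈ range n, a i * b (n - 1 - i))
        ≤ (∑ i ∈ range n, ∑ j ∈ range n, s i j * (a i * b j))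
    ∧ (∑ i ∈ range n, ∑ j ∈ range n, s i j * (a i * b j))
        ≤ ∑ i ∈ range n, a i * b i := by
  have hd : ∀ k, 0 ≤ a k - a (k+1) := fun k => sub_nonneg.2 (ha (Nat.le_succ k))
  have he : ∀ l, 0 ≤ b l - b (l+1) := fun l => sub_nonneg.2 (hb (Nat.le_succ l))
  set T : (ℕ → ℕ → ℝ) → ℕ → ℕ → ℝ := fun c k l =>
    ∑ i ∈ range n, ∑ j ∈ range n, (if i ≤ k ∧ j ≤ l then c i j else 0) with hT
  -- bounds on T s
  have hTs0 : ∀ k l, 0 ≤ T s k l := by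
    intro k l
    refine Finset.sum_nonneg fun i _ => Finset.sum_nonneg fun j _ => ?_
    by_cases h : i ≤ k ∧ j ≤ l <;> simp [h, hs0]
  have hTs_le_k : ∀ k l, k < n → T s k l ≤ (k:ℝ) + 1 := by
    intro k l hk
    calc T s k l ≤ ∑ i ∈ range n, (if i ≤ k then (1:ℝ) else 0) := by
          refine Finset.sum_le_sum fun i hi => ?_
          rw [mem_range] at hi
          by_cases h : i ≤ k
          · simp only [h, true_and, if_true]
            calc ∑ j ∈ range n, (if j ≤ l then s i j else 0)
                ≤ ∑ j ∈ range n, s i j := by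
                  refine Finset.sum_le_sum fun j _ => ?_
                  by_cases hj : j ≤ l <;> simp [hj, hs0]
              _ = 1 := hrow i hi
          · simp [h]
      _ = (k:ℝ) + 1 := count1 n k hk
  have hTs_le_l : ∀ k l, l < n → T s k l ≤ (l:ℝ) + 1 := by
    intro k l hl
    rw [hT]
    simp only
    rw [Finset.sum_comm]
    calc ∑ j ∈ range n, ∑ i ∈ range n, (if i ≤ k ∧ j ≤ l then s i j else 0)
        ≤ ∑ j ∈ range n, (if j ≤ l then (1:ℝ) else 0) := by
          refine Finset.sum_le_sum fun j hj => ?_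
          rw [mem_range] at hj
          by_cases h : j ≤ l
          · simp only [h, and_true, if_true]
            calc ∑ i ∈ range n, (if i ≤ k then s i j else 0)
                ≤ ∑ i ∈ range n, s i j := by
                  refine Finset.sum_le_sum fun i _ => ?_
                  by_cases hi : i ≤ k <;> simp [hi, hs0]
              _ = 1 := hcol j hj
          · simp [h]
      _ = (l:ℝ) + 1 := count1 n l hl
  have hTs_lb : ∀ k l, k < n → l < n → (k:ℝ) + 1 + ((l:ℝ) + 1) - n ≤ T s k l := by
    intro k l hk hl
    set R : ℕ → ℝ := fun i => ∑ j ∈ range n, (if ¬ j ≤ l then s i j else 0) with hR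
    have hR0 : ∀ i, 0 ≤ R i := by
      intro i
      refine Finset.sum_nonneg fun j _ => ?_
      by_cases hj : j ≤ l <;> simp [hj, hs0]
    have hsplit : ∀ i, i < n → (∑ j ∈ range n, (if j ≤ l then s i j else 0)) = 1 - R i := by
      intro i hi
      have : (∑ j ∈ range n, (if j ≤ l then s i j else 0)) + R i = 1 := by
        rw [hR, ← Finset.sum_add_distrib]
        rw [← hrow i hi]
        refine Finset.sum_congr rfl fun j _ => ?_
        by_cases hj : j ≤ l <;> simp [hj]
      linarith
    have hTeq : T s k l = ∑ i ∈ range n, (if i ≤ k then 1 - R i else 0) := by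
      refine Finset.sum_congr rfl fun i hi => ?_
      rw [mem_range] at hi
      by_cases h : i ≤ k
      · simp only [h, true_and, if_true]
        exact hsplit i hi
      · simp [h]
    have hRsum : ∑ i ∈ range n, R i = (n:ℝ) - ((l:ℝ) + 1) := by
      rw [hR]
      rw [Finset.sum_comm]
      have : ∀ j ∈ range n, (∑ i ∈ range n, (if ¬ j ≤ l then s i j else 0))
          = if ¬ j ≤ l then (1:ℝ) else 0 := by
        intro j hj
        rw [mem_range] at hj
        by_cases h : j ≤ l <;> simp [h, hcol j hj]
      rw [Finset.sum_congr rfl this]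
      have h1 : ∀ x, (if ¬ x ≤ l then (1:ℝ) else 0) = 1 - (if x ≤ l then (1:ℝ) else 0) := by
        intro x; by_cases h : x ≤ l <;> simp [h]
      simp only [h1]
      rw [Finset.sum_sub_distrib, Finset.sum_const, count1 n l hl]
      simp
    rw [hTeq]
    have : ∑ i ∈ range n, (if i ≤ k then 1 - R i else 0)
        ≥ ∑ i ∈ range n, ((if i ≤ k then (1:ℝ) else 0) - R i) := by
      refine Finset.sum_le_sum fun i _ => ?_
      by_cases h : i ≤ k <;> simp [h] <;> linarith [hR0 i]
    have h2 : ∑ i ∈ range n, ((if i ≤ k then (1:ℝ) else 0) - R i)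
        = ((k:ℝ) + 1) - ((n:ℝ) - ((l:ℝ)+1)) := by
      rw [Finset.sum_sub_distrib, count1 n k hk, hRsum]
    linarith
  -- diagonal comparison matrices
  set cdiag : ℕ → ℕ → ℝ := fun i j => if i = j then 1 else 0 with hcdiag
  set canti : ℕ → ℕ → ℝ := fun i j => if i + j + 1 = n then 1 else 0 with hcanti
  have hTdiag : ∀ k l, k < n → l < n → T cdiag k l = (min k l : ℝ) + 1 := by
    intro k l hk hl
    have hstep : ∀ i ∈ range n,
        (∑ j ∈ range n, (if i ≤ k ∧ j ≤ l then cdiag i j else 0))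
          = if i ≤ min k l then (1:ℝ) else 0 := by
      intro i hi
      rw [mem_range] at hi
      have h1 : ∀ j, (if i ≤ k ∧ j ≤ l then cdiag i j else 0)
          = if j = i then (if i ≤ min k l then (1:ℝ) else 0) else 0 := by
        intro j
        by_cases hj : j = i
        · subst hj
          rw [hcdiag]
          simp only [if_pos rfl]
          by_cases h : j ≤ k ∧ j ≤ l
          · simp [h.1, h.2, le_min h.1 h.2]
          · have : ¬ j ≤ min k l := by
              rw [le_min_iff]; exact h
            simp [h, this]
        · rw [hcdiag]
          simp only [if_neg hj]
          have : ¬ i = j := fun hh => hj hh.symm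
          simp [this]
      rw [Finset.sum_congr rfl fun j _ => h1 j]
      rw [Finset.sum_ite_eq' (range n) i]
      simp [hi]
    rw [hT]
    simp only
    rw [Finset.sum_congr rfl hstep, count1 n (min k l) (lt_of_le_of_lt (min_le_left k l) hk)]
    simp
  have hTanti : ∀ k l, k < n → l < n → T canti k l ≤ T s k l := by
    intro k l hk hl
    have hstep : ∀ i ∈ range n,
        (∑ j ∈ range n, (if i ≤ k ∧ j ≤ l then canti i j else 0))
          = if i ≤ k ∧ n - 1 - i ≤ l then (1:ℝ) else 0 := by
      intro i hi
      rw [mem_range] at hi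
      have h1 : ∀ j, (if i ≤ k ∧ j ≤ l then canti i j else 0)
          = if j = n - 1 - i then (if i ≤ k ∧ n - 1 - i ≤ l then (1:ℝ) else 0) else 0 := by
        intro j
        rw [hcanti]
        by_cases hj : j = n - 1 - i
        · subst hj
          simp only [if_pos rfl]
          have heq : i + (n - 1 - i) + 1 = n := by omega
          simp [heq]
        · simp only [if_neg hj]
          have : ¬ i + j + 1 = n := by omega
          simp [this]
      rw [Finset.sum_congr rfl fun j _ => h1 j]
      rw [Finset.sum_ite_eq' (range n) (n - 1 - i)]
      have : n - 1 - i ∈ range n := by rw [mem_range]; omega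
      simp [this]
    have hcount : T canti k l = (((range n).filter (fun i => i ≤ k ∧ n - 1 - i ≤ l)).card : ℝ) := by
      rw [hT]
      simp only
      rw [Finset.sum_congr rfl hstep, Finset.sum_boole]
    have hfilt : (range n).filter (fun i => i ≤ k ∧ n - 1 - i ≤ l) = Finset.Icc (n - 1 - l) k := by
      ext i; simp; omega
    rw [hcount, hfilt, Nat.card_Icc]
    by_cases hc : n ≤ k + l + 1
    · have h1 : k + 1 - (n - 1 - l) = k + l + 2 - n := by omega
      rw [h1]
      have h2 : ((k + l + 2 - n : ℕ) : ℝ) = (k:ℝ) + (l:ℝ) + 2 - (n:ℝ) := by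
        have : n ≤ k + l + 2 := by omega
        push_cast [this]
        ring
      rw [h2]
      have := hTs_lb k l hk hl
      linarith
    · have h1 : k + 1 - (n - 1 - l) = 0 := by omega
      rw [h1]
      simpa using hTs0 k l
  -- expansions
  have hmid := expand n s a b han hbn
  have hdiag_expand := expand n cdiag a b han hbn
  have hanti_expand := expand n canti a b han hbn
  have hdiag_sum : ∑ i ∈ range n, a i * b i
      = ∑ i ∈ range n, ∑ j ∈ range n, cdiag i j * (a i * b j) := by
    refine Finset.sum_congr rfl fun i hi => ?_
    have h1 : ∀ j, cdiag i j * (a i * b j) = if j = i then a i * b i else 0 := by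
      intro j
      rw [hcdiag]
      by_cases hj : j = i
      · subst hj; simp
      · have : ¬ i = j := fun hh => hj hh.symm
        simp [this, hj]
    rw [Finset.sum_congr rfl fun j _ => h1 j, Finset.sum_ite_eq' (range n) i]
    simp [hi]
  have hanti_sum : ∑ i ∈ range n, a i * b (n - 1 - i)
      = ∑ i ∈ range n, ∑ j ∈ range n, canti i j * (a i * b j) := by
    refine Finset.sum_congr rfl fun i hi => ?_
    rw [mem_range] at hi
    have h1 : ∀ j, canti i j * (a i * b j) = if j = n - 1 - i then a i * b (n - 1 - i) else 0 := by
      intro j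
      rw [hcanti]
      by_cases hj : j = n - 1 - i
      · subst hj
        have heq : i + (n - 1 - i) + 1 = n := by omega
        simp [heq]
      · have : ¬ i + j + 1 = n := by omega
        simp [this, hj]
    rw [Finset.sum_congr rfl fun j _ => h1 j, Finset.sum_ite_eq' (range n) (n - 1 - i)]
    have : n - 1 - i ∈ range n := by rw [mem_range]; omega
    simp [this]
  constructor
  · rw [hanti_sum, hanti_expand, hmid]
    refine Finset.sum_le_sum fun k hk => Finset.sum_le_sum fun l hl => ?_
    rw [mem_range] at hk hl
    exact mul_le_mul_of_nonneg_left (hTanti k l hk hl) (mul_nonneg (hd k) (he l))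
  · rw [hdiag_sum, hdiag_expand, hmid]
    refine Finset.sum_le_sum fun k hk => Finset.sum_le_sum fun l hl => ?_
    rw [mem_range] at hk hl
    refine mul_le_mul_of_nonneg_left ?_ (mul_nonneg (hd k) (he l))
    show T s k l ≤ T cdiag k l
    rw [hTdiag k l hk hl]
    have h1 := hTs_le_k k l hk
    have h2 := hTs_le_l k l hl
    have : (min k l : ℝ) + 1 = min ((k:ℝ)+1) ((l:ℝ)+1) := by
      rw [min_add_add_right]
    rw [this]
    exact le_min h1 h2

open scoped BigOperators

/-- Ruhe's trace inequality for positive semidefinite Hermitian matrices. -/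
theorem ruhe_trace_inequality {n : ℕ} (A B : Matrix (Fin n) (Fin n) ℝ)
    (hA : A.PosSemidef) (hB : B.PosSemidef)
    (a b : Fin n → ℝ) (ha : Antitone a) (hb : Antitone b)
    (ha0 : ∀ i, 0 ≤ a i) (hb0 : ∀ i, 0 ≤ b i)
    (hpa : ∃ σ : Equiv.Perm (Fin n), a = hA.1.eigenvalues ∘ σ)
    (hpb : ∃ σ : Equiv.Perm (Fin n), b = hB.1.eigenvalues ∘ σ) :
    (∑ i, a i * b i.rev) ≤ (A * B).trace ∧ (A * B).trace ≤ ∑ i, a i * b i := by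
  classical
  obtain ⟨σ, hσ⟩ := hpa
  obtain ⟨τ, hτ⟩ := hpb
  set U : Matrix (Fin n) (Fin n) ℝ := (hA.1.eigenvectorUnitary : Matrix (Fin n) (Fin n) ℝ) with hU
  set V : Matrix (Fin n) (Fin n) ℝ := (hB.1.eigenvectorUnitary : Matrix (Fin n) (Fin n) ℝ) with hV
  set W : Matrix (Fin n) (Fin n) ℝ := star U * V with hW
  have hUU : U * star U = 1 := Matrix.mem_unitaryGroup_iff.mp hA.1.eigenvectorUnitary.2
  have hUU' : star U * U = 1 := Matrix.mem_unitaryGroup_iff'.mp hA.1.eigenvectorUnitary.2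
  have hVV : V * star V = 1 := Matrix.mem_unitaryGroup_iff.mp hB.1.eigenvectorUnitary.2
  have hVV' : star V * V = 1 := Matrix.mem_unitaryGroup_iff'.mp hB.1.eigenvectorUnitary.2
  have hsW : star W = star V * U := by rw [hW, StarMul.star_mul, star_star]
  have hWW : W * star W = 1 := by
    rw [hsW, hW, Matrix.mul_assoc, ← Matrix.mul_assoc V, hVV, Matrix.one_mul, hUU']
  have hWW' : star W * W = 1 := by
    rw [hsW, hW, Matrix.mul_assoc, ← Matrix.mul_assoc U, hUU, Matrix.one_mul, hVV']
  set S : Fin n → Fin n → ℝ := fun p q => (W p q)^2 with hS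
  have hSrow : ∀ p, ∑ q, S p q = 1 := by
    intro p
    have h1 : (W * star W) p p = 1 := by rw [hWW]; simp [Matrix.one_apply]
    rw [Matrix.mul_apply] at h1
    rw [← h1]
    refine Finset.sum_congr rfl fun q _ => ?_
    rw [hS]; simp [Matrix.star_apply]; ring
  have hScol : ∀ q, ∑ p, S p q = 1 := by
    intro q
    have h1 : (star W * W) q q = 1 := by rw [hWW']; simp [Matrix.one_apply]
    rw [Matrix.mul_apply] at h1
    rw [← h1]
    refine Finset.sum_congr rfl fun p _ => ?_
    rw [hS]; simp [Matrix.star_apply]; ring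
  have htr : (A*B).trace = ∑ i, ∑ j, hA.1.eigenvalues i * hB.1.eigenvalues j * S i j := by
    conv_lhs => rw [hA.1.spectral_theorem, hB.1.spectral_theorem, Unitary.conjStarAlgAut_apply,
      Unitary.conjStarAlgAut_apply, ← hU, ← hV]
    simp only [Matrix.mul_assoc]
    rw [Matrix.trace_mul_comm]
    simp only [Matrix.mul_assoc]
    rw [show star V * U = star W from hsW.symm, show star U * (V * (Matrix.diagonal
      (RCLike.ofReal ∘ hB.1.eigenvalues) * star W)) = W * (Matrix.diagonal
      (RCLike.ofReal ∘ hB.1.eigenvalues) * star W) by rw [hW, Matrix.mul_assoc]]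
    simp [Matrix.trace, Matrix.diag, Matrix.mul_apply, Matrix.diagonal, Finset.mul_sum,
      Finset.sum_mul]
    refine Finset.sum_congr rfl fun i _ => Finset.sum_congr rfl fun j _ => ?_
    rw [hS]; ring
  have htr2 : (A*B).trace = ∑ i, ∑ j, a i * b j * S (σ i) (τ j) := by
    rw [htr]
    rw [← Equiv.sum_comp σ (fun i => ∑ j, hA.1.eigenvalues i * hB.1.eigenvalues j * S i (j))]
    refine Finset.sum_congr rfl fun i _ => ?_
    rw [← Equiv.sum_comp τ (fun j => hA.1.eigenvalues (σ i) * hB.1.eigenvalues j * S (σ i) j)]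
    refine Finset.sum_congr rfl fun j _ => ?_
    rw [hσ, hτ]
    simp
  set a' : ℕ → ℝ := fun m => if h : m < n then a ⟨m, h⟩ else 0 with ha'
  set b' : ℕ → ℝ := fun m => if h : m < n then b ⟨m, h⟩ else 0 with hb'
  set s' : ℕ → ℕ → ℝ := fun i j =>
    if h : i < n ∧ j < n then S (σ ⟨i, h.1⟩) (τ ⟨j, h.2⟩) else 0 with hs'
  have ha'anti : Antitone a' := by
    intro m m' hmm
    simp only [ha']
    by_cases h2 : m' < n
    · have h1 : m < n := lt_of_le_of_lt hmm h2
      rw [dif_pos h1, dif_pos h2]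
      exact ha hmm
    · rw [dif_neg h2]
      by_cases h1 : m < n
      · rw [dif_pos h1]; exact ha0 _
      · rw [dif_neg h1]
  have hb'anti : Antitone b' := by
    intro m m' hmm
    simp only [hb']
    by_cases h2 : m' < n
    · have h1 : m < n := lt_of_le_of_lt hmm h2
      rw [dif_pos h1, dif_pos h2]
      exact hb hmm
    · rw [dif_neg h2]
      by_cases h1 : m < n
      · rw [dif_pos h1]; exact hb0 _
      · rw [dif_neg h1]
  have ha'n : a' n = 0 := by simp [ha']
  have hb'n : b' n = 0 := by simp [hb']
  have hs'0 : ∀ i j, 0 ≤ s' i j := by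
    intro i j
    simp only [hs']
    by_cases h : i < n ∧ j < n
    · rw [dif_pos h, hS]; positivity
    · rw [dif_neg h]
  have hrow' : ∀ i, i < n → ∑ j ∈ range n, s' i j = 1 := by
    intro i hi
    rw [Finset.sum_range fun j => s' i j]
    have h1 : ∀ j : Fin n, s' i j = S (σ ⟨i, hi⟩) (τ j) := by
      intro j
      simp only [hs']
      rw [dif_pos ⟨hi, j.isLt⟩]
    rw [Finset.sum_congr rfl fun j _ => h1 j, Equiv.sum_comp τ (fun q => S (σ ⟨i, hi⟩) q)]
    exact hSrow _
  have hcol' : ∀ j, j < n → ∑ i ∈ range n, s' i j = 1 := by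
    intro j hj
    rw [Finset.sum_range fun i => s' i j]
    have h1 : ∀ i : Fin n, s' i j = S (σ i) (τ ⟨j, hj⟩) := by
      intro i
      simp only [hs']
      rw [dif_pos ⟨i.isLt, hj⟩]
    rw [Finset.sum_congr rfl fun i _ => h1 i, Equiv.sum_comp σ (fun p => S p (τ ⟨j, hj⟩))]
    exact hScol _
  have hmain : (A*B).trace = ∑ i ∈ range n, ∑ j ∈ range n, s' i j * (a' i * b' j) := by
    rw [htr2, Finset.sum_range]
    refine Finset.sum_congr rfl fun i _ => ?_
    rw [Finset.sum_range]
    refine Finset.sum_congr rfl fun j _ => ?_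
    simp only [hs', ha', hb']
    rw [dif_pos ⟨i.isLt, j.isLt⟩, dif_pos i.isLt, dif_pos j.isLt]
    simp only [Fin.eta]
    ring
  have hupper : ∑ i, a i * b i = ∑ i ∈ range n, a' i * b' i := by
    rw [Finset.sum_range]
    refine Finset.sum_congr rfl fun i _ => ?_
    simp only [ha', hb']
    rw [dif_pos i.isLt, dif_pos i.isLt]
  have hlower : ∑ i, a i * b i.rev = ∑ i ∈ range n, a' i * b' (n - 1 - i) := by
    rw [Finset.sum_range]
    refine Finset.sum_congr rfl fun i _ => ?_
    have h1 : n - 1 - (i : ℕ) < n := by omega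
    simp only [ha', hb']
    rw [dif_pos i.isLt, dif_pos h1]
    simp only [Fin.eta]
    congr 2
    ext
    simp [Fin.rev]
    omega
  obtain ⟨h1, h2⟩ := key_rearrange n s' a' b' hs'0 hrow' hcol' ha'anti hb'anti ha'n hb'n
  constructor
  · rw [hlower, hmain]; exact h1
  · rw [hmain, hupper]; exact h2
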